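/- Let g be as above and g'(ξ) its derivative. Then g'(ξ) = 2^{1/3}/(3 ξ^{2/3}) (1 + o(1)) as ξ → 0⁺, and g'(ξ) = 8/(3⁵ ξ²) + o(1/ξ²) as ξ → +∞. -/

import Mathlib

open Real Filter Asymptotics

/-- Real cube root: `cbrt x = sign(x) |x|^{1/3}`. -/
noncomputable def cbrt (x : ℝ) : ℝ := Real.sign x * |x| ^ ((1 : ℝ)/3)

/-- `h(ξ) = ξ^{1/3}((1+√(1+ξ))^{1/3} + (1-√(1+ξ))^{1/3})` with real cube roots. -/
noncomputable def hFun (ξ : ℝ) : ℝ :=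
  cbrt ξ * (cbrt (1 + Real.sqrt (1 + ξ)) + cbrt (1 - Real.sqrt (1 + ξ)))

/-- `g(ξ) = h(ξ)(1 - h(ξ)/2)`. -/
noncomputable def gFun (ξ : ℝ) : ℝ := hFun ξ * (1 - hFun ξ / 2)

lemma cbrt_of_pos {x : ℝ} (hx : 0 < x) : cbrt x = x ^ ((1:ℝ)/3) := by
  rw [cbrt, Real.sign_of_pos hx, abs_of_pos hx, one_mul]

lemma cbrt_of_neg {x : ℝ} (hx : x < 0) : cbrt x = -((-x) ^ ((1:ℝ)/3)) := by
  rw [cbrt, Real.sign_of_neg hx, abs_of_neg hx, neg_one_mul]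

lemma cube_rpow {x : ℝ} (hx : 0 ≤ x) : (x ^ ((1:ℝ)/3))^3 = x := by
  rw [← Real.rpow_natCast (x ^ ((1:ℝ)/3)) 3, ← Real.rpow_mul hx]
  norm_num

lemma sqrt_gt_one {ξ : ℝ} (hξ : 0 < ξ) : 1 < Real.sqrt (1+ξ) := by
  have : (1:ℝ) = Real.sqrt 1 := by simp
  rw [this]
  exact Real.sqrt_lt_sqrt (by norm_num) (by linarith)

lemma hFun_eq {ξ : ℝ} (hξ : 0 < ξ) :
    hFun ξ = ξ ^ ((1:ℝ)/3) *
      ((1 + Real.sqrt (1+ξ)) ^ ((1:ℝ)/3) - (Real.sqrt (1+ξ) - 1) ^ ((1:ℝ)/3)) := by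
  have hs := sqrt_gt_one hξ
  have h1 : (0:ℝ) < 1 + Real.sqrt (1+ξ) := by linarith
  have h2 : 1 - Real.sqrt (1+ξ) < 0 := by linarith
  rw [hFun, cbrt_of_pos hξ, cbrt_of_pos h1, cbrt_of_neg h2]
  rw [show -(1 - Real.sqrt (1+ξ)) = Real.sqrt (1+ξ) - 1 by ring]
  ring

lemma hFun_cubic {ξ : ℝ} (hξ : 0 < ξ) : (hFun ξ)^3 = 2*ξ - 3*ξ*hFun ξ := by
  have hs := sqrt_gt_one hξ
  set s := Real.sqrt (1+ξ) with hsdef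
  have hsq : s^2 = 1 + ξ := Real.sq_sqrt (by linarith)
  have h1 : (0:ℝ) ≤ 1 + s := by linarith
  have h2 : (0:ℝ) ≤ s - 1 := by linarith
  set A := (1+s) ^ ((1:ℝ)/3) with hA
  set B := (s-1) ^ ((1:ℝ)/3) with hB
  have hA3 : A^3 = 1 + s := cube_rpow h1
  have hB3 : B^3 = s - 1 := cube_rpow h2
  have hAB : A * B = ξ ^ ((1:ℝ)/3) := by
    rw [hA, hB, ← Real.mul_rpow h1 h2]
    congr 1
    nlinarith [hsq]
  have hx3 : (ξ ^ ((1:ℝ)/3))^3 = ξ := cube_rpow hξ.le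
  rw [hFun_eq hξ]
  have expand : (ξ ^ ((1:ℝ)/3) * (A - B))^3
      = (ξ ^ ((1:ℝ)/3))^3 * (A^3 - B^3) - 3 * ((ξ ^ ((1:ℝ)/3))^2 * (A*B)) * (ξ ^ ((1:ℝ)/3) * (A - B)) := by
    ring
  rw [expand, hA3, hB3, hAB, hx3, ← hsdef, ← hA, ← hB]
  have hq : (ξ ^ ((1:ℝ)/3))^2 * ξ ^ ((1:ℝ)/3) = ξ := by
    nlinarith [hx3]
  rw [show (3:ℝ) * ((ξ ^ ((1:ℝ)/3))^2 * (ξ ^ ((1:ℝ)/3))) * (ξ ^ ((1:ℝ)/3) * (A - B))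
      = 3 * ((ξ ^ ((1:ℝ)/3))^2 * ξ ^ ((1:ℝ)/3)) * (ξ ^ ((1:ℝ)/3) * (A - B)) by ring, hq]
  ring

lemma hFun_pos {ξ : ℝ} (hξ : 0 < ξ) : 0 < hFun ξ := by
  have hs := sqrt_gt_one hξ
  rw [hFun_eq hξ]
  have h1 : (Real.sqrt (1+ξ) - 1) ^ ((1:ℝ)/3) < (1 + Real.sqrt (1+ξ)) ^ ((1:ℝ)/3) :=
    Real.rpow_lt_rpow (by linarith) (by linarith) (by norm_num)
  have h2 : (0:ℝ) < ξ ^ ((1:ℝ)/3) := Real.rpow_pos_of_pos hξ _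
  nlinarith

lemma hFun_lt {ξ : ℝ} (hξ : 0 < ξ) : hFun ξ < 2/3 := by
  have h1 := hFun_cubic hξ
  have h2 := hFun_pos hξ
  nlinarith [pow_pos h2 3]

lemma hFun_hasDeriv {ξ : ℝ} (hξ : 0 < ξ) :
    HasDerivAt hFun ((2 - 3 * hFun ξ) / (3 * ((hFun ξ)^2 + ξ))) ξ := by
  have hs := sqrt_gt_one hξ
  have hev : hFun =ᶠ[nhds ξ] fun t => t ^ ((1:ℝ)/3) *
      ((1 + Real.sqrt (1+t)) ^ ((1:ℝ)/3) - (Real.sqrt (1+t) - 1) ^ ((1:ℝ)/3)) := by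
    filter_upwards [isOpen_Ioi.mem_nhds (show ξ ∈ Set.Ioi (0:ℝ) from hξ)] with t ht
    exact hFun_eq ht
  -- differentiability of the explicit formula
  have hsqrt : HasDerivAt (fun t : ℝ => Real.sqrt (1+t)) (1 / (2 * Real.sqrt (1+ξ))) ξ := by
    have := ((hasDerivAt_id ξ).const_add 1).sqrt (by positivity)
    simpa using this
  have d1 : HasDerivAt (fun t : ℝ => t ^ ((1:ℝ)/3)) ((1:ℝ)/3 * ξ ^ ((1:ℝ)/3 - 1)) ξ :=
    Real.hasDerivAt_rpow_const (Or.inl hξ.ne')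
  have d2 : HasDerivAt (fun t : ℝ => (1 + Real.sqrt (1+t)) ^ ((1:ℝ)/3))
      ((1 / (2 * Real.sqrt (1+ξ))) * ((1:ℝ)/3) * (1 + Real.sqrt (1+ξ)) ^ ((1:ℝ)/3 - 1)) ξ :=
    (hsqrt.const_add 1).rpow_const (Or.inl (by positivity))
  have d3 : HasDerivAt (fun t : ℝ => (Real.sqrt (1+t) - 1) ^ ((1:ℝ)/3))
      ((1 / (2 * Real.sqrt (1+ξ))) * ((1:ℝ)/3) * (Real.sqrt (1+ξ) - 1) ^ ((1:ℝ)/3 - 1)) ξ :=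
    (hsqrt.sub_const 1).rpow_const (Or.inl (by linarith))
  have dH := d1.mul (d2.sub d3)
  have hD : HasDerivAt hFun (deriv hFun ξ) ξ := by
    have : DifferentiableAt ℝ hFun ξ := by
      rw [hev.differentiableAt_iff]
      exact dH.differentiableAt
    exact this.hasDerivAt
  set D := deriv hFun ξ with hDdef
  -- differentiate the cubic identity
  have hFev : (fun t => (hFun t)^3 + 3*t*hFun t - 2*t) =ᶠ[nhds ξ] (fun _ => (0:ℝ)) := by
    filter_upwards [isOpen_Ioi.mem_nhds (show ξ ∈ Set.Ioi (0:ℝ) from hξ)] with t ht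
    have := hFun_cubic ht
    linarith
  have hF : HasDerivAt (fun t => (hFun t)^3 + 3*t*hFun t - 2*t)
      (3 * (hFun ξ)^2 * D + (3 * hFun ξ + 3 * ξ * D) - 2) ξ := by
    have p1 : HasDerivAt (fun t => (hFun t)^3) (3 * (hFun ξ)^2 * D) ξ := by
      exact (hD.pow 3).congr_deriv (by norm_num)
    have p2 : HasDerivAt (fun t : ℝ => 3*t*hFun t) (3 * hFun ξ + 3 * ξ * D) ξ := by
      exact (((hasDerivAt_id ξ).const_mul 3).mul hD).congr_deriv (by simp)
    have p3 : HasDerivAt (fun t : ℝ => 2*t) 2 ξ := by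
      simpa using (hasDerivAt_id ξ).const_mul 2
    exact (p1.add p2).sub p3
  have hF0 : HasDerivAt (fun t => (hFun t)^3 + 3*t*hFun t - 2*t) 0 ξ :=
    (hasDerivAt_const ξ (0:ℝ)).congr_of_eventuallyEq hFev
  have heq : 3 * (hFun ξ)^2 * D + (3 * hFun ξ + 3 * ξ * D) - 2 = 0 := hF.unique hF0
  have hden : 0 < 3 * ((hFun ξ)^2 + ξ) := by positivity
  have hDval : D = (2 - 3 * hFun ξ) / (3 * ((hFun ξ)^2 + ξ)) := by
    field_simp
    linarith
  rwa [hDval] at hD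

lemma g'_eq {g' : ℝ → ℝ} (hg' : ∀ ξ : ℝ, 0 < ξ → HasDerivAt gFun (g' ξ) ξ)
    {ξ : ℝ} (hξ : 0 < ξ) :
    g' ξ = (2 - 3 * hFun ξ) * (1 - hFun ξ) / (3 * ((hFun ξ)^2 + ξ)) := by
  have hD := hFun_hasDeriv hξ
  set D := (2 - 3 * hFun ξ) / (3 * ((hFun ξ)^2 + ξ)) with hDdef
  have hG : HasDerivAt gFun (D * (1 - hFun ξ / 2) + hFun ξ * (-(D/2))) ξ := by
    have := hD.mul ((hasDerivAt_const ξ (1:ℝ)).sub (hD.div_const 2))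
    exact this.congr_deriv (by simp only [Pi.sub_apply]; ring)
  have := (hg' ξ hξ).unique hG
  rw [this, hDdef]
  have hden : (3 * ((hFun ξ)^2 + ξ)) ≠ 0 := by positivity
  field_simp
  ring

lemma part1 {g' : ℝ → ℝ} (hg' : ∀ ξ : ℝ, 0 < ξ → HasDerivAt gFun (g' ξ) ξ) :
    ((fun ξ : ℝ => g' ξ - (2 : ℝ) ^ ((1 : ℝ)/3) / (3 * ξ ^ ((2 : ℝ)/3)))
        =o[nhdsWithin 0 (Set.Ioi 0)]
      (fun ξ : ℝ => (2 : ℝ) ^ ((1 : ℝ)/3) / (3 * ξ ^ ((2 : ℝ)/3)))) := by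
  set l := nhdsWithin (0:ℝ) (Set.Ioi 0) with hl
  set c : ℝ → ℝ := fun ξ => (1 + Real.sqrt (1+ξ)) ^ ((1:ℝ)/3) - (Real.sqrt (1+ξ) - 1) ^ ((1:ℝ)/3)
    with hc
  -- limit of sqrt
  have ts : Tendsto (fun ξ : ℝ => Real.sqrt (1+ξ)) l (nhds 1) := by
    have : Continuous fun ξ : ℝ => Real.sqrt (1+ξ) :=
      Real.continuous_sqrt.comp (continuous_const.add continuous_id)
    exact (this.tendsto' 0 1 (by simp)).mono_left nhdsWithin_le_nhds
  -- limit of c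
  have tc : Tendsto c l (nhds ((2:ℝ) ^ ((1:ℝ)/3))) := by
    have t1 : Tendsto (fun ξ : ℝ => (1 + Real.sqrt (1+ξ)) ^ ((1:ℝ)/3)) l
        (nhds ((2:ℝ) ^ ((1:ℝ)/3))) := by
      have := (Real.continuousAt_rpow_const 2 ((1:ℝ)/3) (Or.inl two_ne_zero)).tendsto
      refine this.comp ?_
      have h2 : Tendsto (fun ξ : ℝ => 1 + Real.sqrt (1+ξ)) l (nhds (1+1)) :=
        tendsto_const_nhds.add ts
      norm_num at h2
      exact h2
    have t2 : Tendsto (fun ξ : ℝ => (Real.sqrt (1+ξ) - 1) ^ ((1:ℝ)/3)) l (nhds 0) := by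
      have h0 : ((0:ℝ)) ^ ((1:ℝ)/3) = 0 := Real.zero_rpow (by norm_num)
      have := (Real.continuousAt_rpow_const 0 ((1:ℝ)/3) (Or.inr (by norm_num))).tendsto
      rw [h0] at this
      refine this.comp ?_
      have h2 := ts.sub (tendsto_const_nhds : Tendsto (fun _ : ℝ => (1:ℝ)) l (nhds 1))
      norm_num at h2
      exact h2
    have := t1.sub t2
    rw [sub_zero] at this
    exact this
  have tq : Tendsto (fun ξ : ℝ => ξ ^ ((1:ℝ)/3)) l (nhds 0) := by
    have h0 : ((0:ℝ)) ^ ((1:ℝ)/3) = 0 := Real.zero_rpow (by norm_num)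
    have := (Real.continuousAt_rpow_const 0 ((1:ℝ)/3) (Or.inr (by norm_num))).tendsto
    rw [h0] at this
    exact this.mono_left nhdsWithin_le_nhds
  have th : Tendsto hFun l (nhds 0) := by
    have : Tendsto (fun ξ : ℝ => ξ ^ ((1:ℝ)/3) * c ξ) l (nhds (0 * (2:ℝ) ^ ((1:ℝ)/3))) :=
      tq.mul tc
    rw [zero_mul] at this
    refine this.congr' ?_ |>.mono_left le_rfl
    filter_upwards [self_mem_nhdsWithin] with ξ hξ
    exact (hFun_eq hξ).symm
  -- the key ratio tendsto
  have cube2 : ((2:ℝ) ^ ((1:ℝ)/3))^3 = 2 := cube_rpow (by norm_num)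
  have tE : Tendsto (fun ξ : ℝ =>
      (2 - 3 * hFun ξ) * (1 - hFun ξ) / ((2:ℝ) ^ ((1:ℝ)/3) * ((c ξ)^2 + ξ ^ ((1:ℝ)/3))))
      l (nhds 1) := by
    have tnum : Tendsto (fun ξ : ℝ => (2 - 3 * hFun ξ) * (1 - hFun ξ)) l (nhds 2) := by
      have := ((tendsto_const_nhds.sub (th.const_mul 3)).mul
        (tendsto_const_nhds.sub th) :
        Tendsto (fun ξ : ℝ => (2 - 3 * hFun ξ) * (1 - hFun ξ)) l (nhds ((2 - 3*0)*(1-0))))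
      simpa using this
    have tden : Tendsto (fun ξ : ℝ => (2:ℝ) ^ ((1:ℝ)/3) * ((c ξ)^2 + ξ ^ ((1:ℝ)/3))) l
        (nhds 2) := by
      have := (tendsto_const_nhds.mul (((tc.pow 2)).add tq) :
        Tendsto _ l (nhds ((2:ℝ) ^ ((1:ℝ)/3) * (((2:ℝ) ^ ((1:ℝ)/3))^2 + 0))))
      convert this using 2
      nlinarith [cube2]
    have := tnum.div tden (by norm_num)
    convert this using 2 <;> norm_num
  -- convert to the o-statement
  have hne : ∀ᶠ ξ in l, (2 : ℝ) ^ ((1 : ℝ)/3) / (3 * ξ ^ ((2 : ℝ)/3)) ≠ 0 := by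
    filter_upwards [self_mem_nhdsWithin] with ξ (hξ : 0 < ξ)
    have h1 : (0:ℝ) < ξ ^ ((2:ℝ)/3) := Real.rpow_pos_of_pos hξ _
    positivity
  rw [isLittleO_iff_tendsto' (by filter_upwards [hne] with ξ h h'; exact absurd h' h)]
  have key : ∀ᶠ ξ in l,
      (g' ξ - (2 : ℝ) ^ ((1 : ℝ)/3) / (3 * ξ ^ ((2 : ℝ)/3))) /
        ((2 : ℝ) ^ ((1 : ℝ)/3) / (3 * ξ ^ ((2 : ℝ)/3)))
      = (2 - 3 * hFun ξ) * (1 - hFun ξ) / ((2:ℝ) ^ ((1:ℝ)/3) * ((c ξ)^2 + ξ ^ ((1:ℝ)/3))) - 1 := by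
    filter_upwards [self_mem_nhdsWithin] with ξ (hξ : 0 < ξ)
    have hq : (0:ℝ) < ξ ^ ((1:ℝ)/3) := Real.rpow_pos_of_pos hξ _
    have hr : (0:ℝ) < ξ ^ ((2:ℝ)/3) := Real.rpow_pos_of_pos hξ _
    have hq2 : (ξ ^ ((1:ℝ)/3))^2 = ξ ^ ((2:ℝ)/3) := by
      rw [← Real.rpow_natCast (ξ ^ ((1:ℝ)/3)) 2, ← Real.rpow_mul hξ.le]
      norm_num
    have hrq : ξ ^ ((2:ℝ)/3) * ξ ^ ((1:ℝ)/3) = ξ := by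
      rw [← Real.rpow_add hξ]
      norm_num
    have hh : hFun ξ = ξ ^ ((1:ℝ)/3) * c ξ := hFun_eq hξ
    have hsum : (hFun ξ)^2 + ξ = ξ ^ ((2:ℝ)/3) * ((c ξ)^2 + ξ ^ ((1:ℝ)/3)) := by
      rw [hh]
      nlinarith [hq2, hrq]
    have hcpos : 0 < (c ξ)^2 + ξ ^ ((1:ℝ)/3) := by
      have : 0 < (hFun ξ)^2 + ξ := by positivity
      nlinarith [hsum, Real.rpow_pos_of_pos hξ ((2:ℝ)/3)]
    have h2 : (0:ℝ) < (2:ℝ) ^ ((1:ℝ)/3) := Real.rpow_pos_of_pos (by norm_num) _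
    rw [g'_eq hg' hξ, hsum]
    field_simp
  have final := tE.sub (tendsto_const_nhds : Tendsto (fun _ : ℝ => (1:ℝ)) l (nhds 1))
  rw [sub_self] at final
  exact Filter.Tendsto.congr' (key.mono fun ξ h => h.symm) final

lemma hFun_tendsto_atTop : Tendsto hFun atTop (nhds (2/3)) := by
  have hlow : ∀ᶠ ξ : ℝ in atTop, 2*ξ/(4/9+3*ξ) ≤ hFun ξ := by
    filter_upwards [eventually_gt_atTop (0:ℝ)] with ξ hξ
    have hcub := hFun_cubic hξ
    have hpos := hFun_pos hξ
    have hlt := hFun_lt hξ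
    have hden : (0:ℝ) < 4/9 + 3*ξ := by linarith
    rw [div_le_iff₀ hden]
    nlinarith [sq_nonneg (hFun ξ)]
  have hup : ∀ᶠ ξ : ℝ in atTop, hFun ξ ≤ 2/3 := by
    filter_upwards [eventually_gt_atTop (0:ℝ)] with ξ hξ
    exact (hFun_lt hξ).le
  have tlow : Tendsto (fun ξ : ℝ => 2*ξ/(4/9+3*ξ)) atTop (nhds (2/3)) := by
    have h1 : Tendsto (fun ξ : ℝ => 4/(9*ξ)) atTop (nhds 0) :=
      Tendsto.div_atTop tendsto_const_nhds (tendsto_atTop_atTop_of_monotone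
        (fun a b hab => by linarith) (fun b => ⟨b/9 + 1, by nlinarith⟩))
    have h2 : Tendsto (fun ξ : ℝ => 2/(4/(9*ξ)+3)) atTop (nhds (2/(0+3))) :=
      tendsto_const_nhds.div (h1.add tendsto_const_nhds) (by norm_num)
    norm_num at h2
    refine h2.congr' ?_
    filter_upwards [eventually_gt_atTop (0:ℝ)] with ξ hξ
    field_simp
  exact tendsto_of_tendsto_of_tendsto_of_le_of_le' tlow tendsto_const_nhds hlow hup

lemma part2 {g' : ℝ → ℝ} (hg' : ∀ ξ : ℝ, 0 < ξ → HasDerivAt gFun (g' ξ) ξ) :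
    (fun ξ : ℝ => g' ξ - 8 / (3 ^ 5 * ξ ^ 2)) =o[atTop] (fun ξ : ℝ => 1 / ξ ^ 2) := by
  have th := hFun_tendsto_atTop
  -- ξ(2−3h) → 8/27
  have t1 : Tendsto (fun ξ : ℝ => ξ * (2 - 3 * hFun ξ)) atTop (nhds (8/27)) := by
    have hp : Tendsto (fun ξ : ℝ => (hFun ξ)^3) atTop (nhds ((2/3)^3)) := th.pow 3
    norm_num at hp
    refine hp.congr' ?_
    filter_upwards [eventually_gt_atTop (0:ℝ)] with ξ hξ
    have := hFun_cubic hξ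
    linarith
  -- ξ/(h²+ξ) → 1
  have t2 : Tendsto (fun ξ : ℝ => ξ / ((hFun ξ)^2 + ξ)) atTop (nhds 1) := by
    have hq : Tendsto (fun ξ : ℝ => (hFun ξ)^2 / ξ) atTop (nhds 0) :=
      Tendsto.div_atTop (th.pow 2) tendsto_id
    have h2 : Tendsto (fun ξ : ℝ => 1/((hFun ξ)^2/ξ + 1)) atTop (nhds (1/(0+1))) :=
      tendsto_const_nhds.div (hq.add tendsto_const_nhds) (by norm_num)
    norm_num at h2
    refine h2.congr' ?_
    filter_upwards [eventually_gt_atTop (0:ℝ)] with ξ hξ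
    have hden : (0:ℝ) < (hFun ξ)^2 + ξ := by positivity
    field_simp
  -- main limit
  have tmain : Tendsto (fun ξ : ℝ => g' ξ * ξ^2) atTop (nhds (8/243)) := by
    have t3 : Tendsto (fun ξ : ℝ =>
        (ξ * (2 - 3 * hFun ξ)) * (1 - hFun ξ) * (ξ / ((hFun ξ)^2 + ξ)) / 3) atTop
        (nhds ((8/27) * (1 - 2/3) * 1 / 3)) :=
      ((t1.mul (tendsto_const_nhds.sub th)).mul t2).div_const 3
    norm_num at t3
    refine t3.congr' ?_
    filter_upwards [eventually_gt_atTop (0:ℝ)] with ξ hξ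
    have hden : (0:ℝ) < (hFun ξ)^2 + ξ := by positivity
    rw [g'_eq hg' hξ]
    field_simp
  have hne : ∀ᶠ ξ : ℝ in atTop, (1:ℝ) / ξ^2 ≠ 0 := by
    filter_upwards [eventually_gt_atTop (0:ℝ)] with ξ hξ
    positivity
  rw [isLittleO_iff_tendsto' (by filter_upwards [hne] with ξ h h'; exact absurd h' h)]
  have final : Tendsto (fun ξ : ℝ => g' ξ * ξ^2 - 8/243) atTop (nhds 0) := by
    have := tmain.sub (tendsto_const_nhds : Tendsto (fun _ : ℝ => (8:ℝ)/243) atTop (nhds (8/243)))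
    rwa [sub_self] at this
  refine Filter.Tendsto.congr' ?_ final
  filter_upwards [eventually_gt_atTop (0:ℝ)] with ξ hξ
  have hξ2 : ξ^2 ≠ 0 := by positivity
  field_simp
  ring


/-- asymptotics of `g'`:
`g'(ξ) = 2^{1/3}/(3 ξ^{2/3})(1 + o(1))` as `ξ → 0⁺`, and
`g'(ξ) = 8/(3⁵ ξ²) + o(1/ξ²)` as `ξ → +∞`. -/
theorem stmt_6 (g' : ℝ → ℝ) (hg' : ∀ ξ : ℝ, 0 < ξ → HasDerivAt gFun (g' ξ) ξ) :
    ((fun ξ : ℝ => g' ξ - (2 : ℝ) ^ ((1 : ℝ)/3) / (3 * ξ ^ ((2 : ℝ)/3)))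
        =o[nhdsWithin 0 (Set.Ioi 0)]
      (fun ξ : ℝ => (2 : ℝ) ^ ((1 : ℝ)/3) / (3 * ξ ^ ((2 : ℝ)/3))))
    ∧ ((fun ξ : ℝ => g' ξ - 8 / (3 ^ 5 * ξ ^ 2)) =o[atTop] (fun ξ : ℝ => 1 / ξ ^ 2)) := by
  exact ⟨part1 hg', part2 hg'⟩
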